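/- Let G be a finite group of order ℓ, let 2 ≤ q ≤ e_ℓ, let X be a free G-space and let Y be a Hausdorff topological space. If the triple (X,G;Y) does not satisfy the q-th Borsuk-Ulam property, then secat(X → X/G) ≤ secat(Map_q(G,Y) → Map_q(G,Y)/G), where both maps are the quotient maps by the respective G-actions. -/
import Mathlib


/-- `Map_q(G,Y)`: functions `G → Y` that are non-constant on every `q`-element subset of `G`. -/
def MapQ (G Y : Type*) (q : ℕ) : Set (G → Y) :=
  {φ | ∀ S : Finset G, S.card = q → ¬∃ y : Y, ∀ g ∈ S, φ g = y}

theorem MapQ.smul_mem {G Y : Type*} [Group G] {q : ℕ} (g : G) {φ : G → Y}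
    (hφ : φ ∈ MapQ G Y q) : (fun h => φ (g⁻¹ * h)) ∈ MapQ G Y q := by
  classical
  rintro S hS ⟨y, hy⟩
  refine hφ (S.image (fun h => g⁻¹ * h)) ?_ ⟨y, ?_⟩
  · rwa [Finset.card_image_of_injective _ (mul_right_injective g⁻¹)]
  · rintro a ha
    obtain ⟨b, hb, rfl⟩ := Finset.mem_image.mp ha
    exact hy b hb

/-- The left `G`-action on `Map_q(G,Y)` given by `(g • φ) h = φ (g⁻¹ * h)`. -/
instance MapQ.instSMul {G Y : Type*} [Group G] {q : ℕ} : SMul G (MapQ G Y q) :=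
  ⟨fun g φ => ⟨fun h => (φ : G → Y) (g⁻¹ * h), MapQ.smul_mem g φ.2⟩⟩

instance MapQ.instMulAction {G Y : Type*} [Group G] {q : ℕ} :
    MulAction G (MapQ G Y q) where
  one_smul φ := Subtype.ext <| funext fun h => by
    show (φ : G → Y) ((1 : G)⁻¹ * h) = (φ : G → Y) h
    rw [inv_one, one_mul]
  mul_smul g k φ := Subtype.ext <| funext fun h => by
    show (φ : G → Y) ((g * k)⁻¹ * h) = (φ : G → Y) (k⁻¹ * (g⁻¹ * h))
    rw [mul_inv_rev, mul_assoc]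

/-- The sectional category of a map: the least `n` such that the base admits a cover by `n`
open sets, each admitting a continuous local section; `∞` if no such finite cover exists. -/
noncomputable def secat {E B : Type*} [TopologicalSpace E] [TopologicalSpace B]
    (p : E → B) : ℕ∞ :=
  ⨅ (n : ℕ) (_ : ∃ U : Fin n → Set B, (∀ i, IsOpen (U i)) ∧ (⋃ i, U i) = Set.univ ∧
      ∀ i, ∃ s : C(U i, E), ∀ b : U i, p (s b) = (b : B)), (n : ℕ∞)

/-- The triple `(X,G;Y)` satisfies the `q`-th Borsuk-Ulam property. -/
def BorsukUlam (G : Type*) [Group G] (X Y : Type*) [TopologicalSpace X] [TopologicalSpace Y]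
    [MulAction G X] (q : ℕ) : Prop :=
  ∀ f : C(X, Y), ∃ (x : X) (S : Finset G), S.card = q ∧ ∃ y : Y, ∀ g ∈ S, f (g • x) = y

/-- The `q`-th index of `(X,G)`: the least `k` such that there is a continuous `G`-equivariant
map `X → Map_q(G, ℝ^{k+1})`; `∞` if no such `k` exists. -/
noncomputable def indexQ (G : Type*) [Group G] (X : Type*) [TopologicalSpace X]
    [MulAction G X] (q : ℕ) : ℕ∞ :=
  ⨅ (k : ℕ) (_ : ∃ Φ : C(X, MapQ G (Fin (k + 1) → ℝ) q),
      ∀ (g : G) (x : X), Φ (g • x) = g • Φ x), (k : ℕ∞)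

/-- If `q ≤ minFac |G|`, the action of `G` on `MapQ G Y q` is free. -/
theorem MapQ.free_smul {G Y : Type*} [Group G] [Fintype G] {q : ℕ}
    (hq : q ≤ (Fintype.card G).minFac)
    (g : G) (φ : MapQ G Y q) (h : g • φ = φ) : g = 1 := by
  classical
  by_contra hg
  have hkey : ∀ x : G, (φ : G → Y) (g⁻¹ * x) = (φ : G → Y) x :=
    fun x => congrFun (congrArg Subtype.val h) x
  have h1 : orderOf g ≠ 1 := fun e => hg (orderOf_eq_one_iff.mp e)
  have h0 : 0 < orderOf g := orderOf_pos g
  have hord2 : 2 ≤ orderOf g := by omega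
  have hqo : q ≤ orderOf g := hq.trans (Nat.minFac_le_of_dvd hord2 orderOf_dvd_card)
  have hpow : ∀ n : ℕ, (φ : G → Y) (g ^ n) = (φ : G → Y) 1 := by
    intro n
    induction n with
    | zero => rw [pow_zero]
    | succ n ih =>
        have h2 := hkey (g ^ (n + 1))
        rw [pow_succ' g n, inv_mul_cancel_left] at h2
        rw [pow_succ' g n, ← h2, ih]
  refine φ.2 ((Finset.range q).image (g ^ ·)) ?_ ⟨(φ : G → Y) 1, ?_⟩
  · rw [Finset.card_image_of_injOn, Finset.card_range]
    intro a ha b hb hab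
    exact pow_injOn_Iio_orderOf (lt_of_lt_of_le (Finset.mem_range.mp ha) hqo)
      (lt_of_lt_of_le (Finset.mem_range.mp hb) hqo) hab
  · rintro a ha
    obtain ⟨n, _, rfl⟩ := Finset.mem_image.mp ha
    exact hpow n

open MulAction in
/-- If there is a continuous equivariant map from `X` to a Hausdorff free `G`-space `Z`,
then `secat (X → X/G) ≤ secat (Z → Z/G)`. -/
theorem aux_secat_le {G X Z : Type*} [Group G] [Finite G] [TopologicalSpace X]
    [TopologicalSpace Z] [T2Space Z] [MulAction G X] [MulAction G Z]
    [ContinuousConstSMul G X]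
    (hfreeZ : ∀ (g : G) (z : Z), g • z = z → g = 1)
    (Φ : C(X, Z)) (hΦ : ∀ (g : G) (x : X), Φ (g • x) = g • Φ x) :
    secat (Quotient.mk (orbitRel G X)) ≤ secat (Quotient.mk (orbitRel G Z)) := by
  classical
  have hresp : ∀ x x' : X, (orbitRel G X) x x' →
      Quotient.mk (orbitRel G Z) (Φ x) = Quotient.mk (orbitRel G Z) (Φ x') := by
    intro x x' hr
    rw [orbitRel_apply, mem_orbit_iff] at hr
    obtain ⟨g, rfl⟩ := hr
    exact Quotient.sound (orbitRel_apply.mpr (by rw [hΦ]; exact mem_orbit _ g))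
  let φbar : Quotient (orbitRel G X) → Quotient (orbitRel G Z) :=
    Quotient.lift (fun x => Quotient.mk (orbitRel G Z) (Φ x)) hresp
  have hφbar : Continuous φbar :=
    Continuous.quotient_lift (continuous_quotient_mk'.comp Φ.continuous) _
  have hopenMap : IsOpenMap (Quotient.mk (orbitRel G X)) := isOpenMap_quotient_mk'_mul
  refine le_iInf fun n => le_iInf fun hn => iInf_le_of_le n (iInf_le_of_le ?_ le_rfl)
  obtain ⟨U, hUopen, hUcov, hUsec⟩ := hn
  refine ⟨fun i => φbar ⁻¹' U i, fun i => (hUopen i).preimage hφbar, ?_, ?_⟩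
  · rw [← Set.preimage_iUnion, hUcov, Set.preimage_univ]
  intro i
  obtain ⟨s, hs⟩ := hUsec i
  set V : Set (Quotient (orbitRel G X)) := φbar ⁻¹' U i with hV
  let e : V → U i := fun v => ⟨φbar v, v.2⟩
  have he : Continuous e := Continuous.subtype_mk (hφbar.comp continuous_subtype_val) _
  let ψ : V → Z := fun v => s (e v)
  have hψ : Continuous ψ := s.continuous.comp he
  have hψq : ∀ v : V, Quotient.mk (orbitRel G Z) (ψ v) = φbar (v : _) := fun v => hs (e v)
  have hex : ∀ v : V, ∃ x : X,
      Quotient.mk (orbitRel G X) x = (v : _) ∧ Φ x = ψ v := by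
    intro v
    obtain ⟨x, hx⟩ := Quotient.exists_rep (v : Quotient (orbitRel G X))
    have h1 : Quotient.mk (orbitRel G Z) (ψ v) = Quotient.mk (orbitRel G Z) (Φ x) := by
      rw [hψq v, ← hx]; rfl
    rw [Quotient.eq, orbitRel_apply, mem_orbit_iff] at h1
    obtain ⟨g, hg⟩ := h1
    refine ⟨g • x, ?_, by rw [hΦ, hg]⟩
    rw [← hx]
    exact Quotient.sound (orbitRel_apply.mpr (mem_orbit _ g))
  let t : V → X := fun v => (hex v).choose
  have ht1 : ∀ v : V, Quotient.mk (orbitRel G X) (t v) = (v : _) :=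
    fun v => (hex v).choose_spec.1
  have ht2 : ∀ v : V, Φ (t v) = ψ v := fun v => (hex v).choose_spec.2
  have htc : Continuous t := by
    rw [continuous_def]
    intro O hO
    rw [isOpen_iff_forall_mem_open]
    intro v₀ hv₀
    set x₀ := t v₀ with hx₀
    have hsep : ∀ g : G, ∃ A B : Set Z, IsOpen A ∧ IsOpen B ∧ Φ x₀ ∈ A ∧ Φ (g • x₀) ∈ B ∧
        (g ≠ 1 → Disjoint A B) := by
      intro g
      by_cases hg : g = 1
      · exact ⟨Set.univ, Set.univ, isOpen_univ, isOpen_univ, trivial, trivial,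
          fun h => absurd hg h⟩
      · have hne : Φ x₀ ≠ Φ (g • x₀) := by
          intro he
          refine hg (hfreeZ g (Φ x₀) ?_)
          rw [← hΦ, ← he]
        obtain ⟨A, B, hA, hB, hxA, hxB, hAB⟩ := t2_separation hne
        exact ⟨A, B, hA, hB, hxA, hxB, fun _ => hAB⟩
    choose A B hAo hBo hxA hxB hABd using hsep
    set O' : Set X :=
      (O ∩ ⋂ g : G, (fun x => Φ (g • x)) ⁻¹' B g) ∩ Φ ⁻¹' (⋂ g : G, A g) with hO'
    have hO'open : IsOpen O' := by
      refine IsOpen.inter (hO.inter (isOpen_iInter_of_finite fun g =>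
        (hBo g).preimage (Φ.continuous.comp (continuous_const_smul g)))) ?_
      exact (isOpen_iInter_of_finite hAo).preimage Φ.continuous
    have hx₀O' : x₀ ∈ O' :=
      ⟨⟨hv₀, Set.mem_iInter.mpr fun g => hxB g⟩, Set.mem_iInter.mpr fun g => hxA g⟩
    refine ⟨(Subtype.val ⁻¹' (Quotient.mk (orbitRel G X) '' O')) ∩
        ψ ⁻¹' (⋂ g : G, A g), ?_, ?_, ?_⟩
    · rintro v ⟨⟨x, hxO', hxq⟩, hvA⟩
      have hrel : Quotient.mk (orbitRel G X) (t v) = Quotient.mk (orbitRel G X) x := by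
        rw [ht1 v, hxq]
      rw [Quotient.eq, orbitRel_apply, mem_orbit_iff] at hrel
      obtain ⟨g, hg⟩ := hrel
      by_cases hg1 : g = 1
      · rw [hg1, one_smul] at hg
        show t v ∈ O
        rw [← hg]
        exact hxO'.1.1
      · exfalso
        have hmemB : ψ v ∈ B g := by
          rw [← ht2 v, ← hg]
          exact Set.mem_iInter.mp hxO'.1.2 g
        exact Set.disjoint_left.mp (hABd g hg1) (Set.mem_iInter.mp hvA g) hmemB
    · exact IsOpen.inter ((hopenMap O' hO'open).preimage continuous_subtype_val)
        ((isOpen_iInter_of_finite hAo).preimage hψ)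
    · refine ⟨⟨x₀, hx₀O', ht1 v₀⟩, ?_⟩
      rw [Set.mem_preimage, ← ht2 v₀]
      exact Set.mem_iInter.mpr fun g => hxA g
  exact ⟨⟨t, htc⟩, ht1⟩

/-- If `(X,G;Y)` does not satisfy the `q`-th Borsuk-Ulam property, then
`secat(X → X/G) ≤ secat(Map_q(G,Y) → Map_q(G,Y)/G)`. -/
theorem statement_4 {G : Type*} [Group G] [Fintype G] {X Y : Type*}
    [TopologicalSpace X] [TopologicalSpace Y] [T2Space Y]
    [MulAction G X] [ContinuousConstSMul G X]
    (hfree : ∀ (g : G) (x : X), g • x = x → g = 1)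
    {q : ℕ} (hq2 : 2 ≤ q) (hq : q ≤ (Fintype.card G).minFac)
    (hbup : ¬ BorsukUlam G X Y q) :
    secat (Quotient.mk (MulAction.orbitRel G X)) ≤
      secat (Quotient.mk (MulAction.orbitRel G (MapQ G Y q))) := by
  classical
  simp only [BorsukUlam, not_forall] at hbup
  obtain ⟨f, hf⟩ := hbup
  push_neg at hf
  have hmem : ∀ x : X, (fun g : G => f (g⁻¹ • x)) ∈ MapQ G Y q := by
    intro x
    rintro S hS ⟨y, hy⟩
    have hcard : (S.image (·⁻¹)).card = q := by
      rw [Finset.card_image_of_injective _ inv_injective, hS]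
    obtain ⟨g, hgmem, hgne⟩ := hf x (S.image (·⁻¹)) hcard y
    obtain ⟨h, hh, rfl⟩ := Finset.mem_image.mp hgmem
    exact hgne (hy h hh)
  let Φ : C(X, MapQ G Y q) :=
    ⟨fun x => ⟨fun g => f (g⁻¹ • x), hmem x⟩,
      Continuous.subtype_mk
        (continuous_pi fun g => f.continuous.comp (continuous_const_smul g⁻¹)) _⟩
  have hΦ : ∀ (g : G) (x : X), Φ (g • x) = g • Φ x := by
    intro g x
    refine Subtype.ext (funext fun h => ?_)
    show f (h⁻¹ • g • x) = f ((g⁻¹ * h)⁻¹ • x)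
    rw [mul_inv_rev, inv_inv, mul_smul]
  exact aux_secat_le (fun g φ => MapQ.free_smul hq g φ) Φ hΦ
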